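/- Let p be an odd prime and q = p^r. Let f be a function from (ℤ/qℤ)^× to ℝ that is monotone (nondecreasing) when viewed as a function on the representatives {1 ≤ i ≤ q : p ∤ i} ordered as integers. Let k ∈ (ℤ/qℤ)^×. Then f(k·u) = f(u) for all u ∈ (ℤ/qℤ)^× if and only if k = 1 or f is constant. -/

import Mathlib

lemma main_lemma (p r q : ℕ) (hp : p.Prime) (hodd : p ≠ 2) (hr : 1 ≤ r)
    (hqpr : q = p ^ r) (k τ : ℕ)
    (hk2 : 2 ≤ k) (hkq : k < q) (hkp : ¬ p ∣ k) (hτ1 : 1 ≤ τ) (hτq : 2 * τ + 1 ≤ q)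
    (INV : ∀ x, 1 ≤ x → x ≤ τ → ¬ p ∣ x → (k * x) % q ≤ τ) :
    p = 3 ∧ 3 * k + 3 = q := by
  have hp3 : 3 ≤ p := by
    rcases hp.two_le.lt_or_eq with h | h; · omega
    · exact absurd h.symm hodd
  have hpq : p ∣ q := hqpr ▸ dvd_pow_self p (by omega)
  have hq1 : 1 < q := by omega
  have hnd1 : ¬ p ∣ 1 := fun h => by have := Nat.dvd_one.mp h; omega
  -- D1 : k ≤ τ
  have hkτ : k ≤ τ := by
    have h := INV 1 le_rfl hτ1 hnd1
    rwa [mul_one, Nat.mod_eq_of_lt hkq] at h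
  have hτ2 : 2 ≤ τ := le_trans hk2 hkτ
  -- gap lemma
  have gap : ∀ j n, 1 ≤ n → n ≤ τ → j * q + τ < k * n → k * n ≤ (j+1) * q → p ∣ n := by
    intro j n hn1 hnτ hlo hhi
    by_contra hpn
    have h1 : (k * n) % q ≤ τ := INV n hn1 hnτ hpn
    have hpkn : ¬ p ∣ k * n := fun h => (hp.dvd_mul.mp h).elim hkp hpn
    have hne : k * n ≠ (j+1) * q := fun h => hpkn (h ▸ Dvd.dvd.mul_left hpq (j+1))
    have e1 : (j+1) * q = j * q + q := by ring
    have hlt : k * n < j * q + q := by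
      have := lt_of_le_of_ne hhi hne; omega
    have hdiv : (k * n) / q = j := by
      apply Nat.div_eq_of_lt_le
      · omega
      · have : (j + 1) * q = j * q + q := by ring
        omega
    have h2 := Nat.div_add_mod (k * n) q
    rw [hdiv] at h2
    have e2 : q * j = j * q := by ring
    omega
  -- D2 : q < k * τ
  have hqkτ : q < k * τ := by
    by_contra hle
    push_neg at hle
    have key : ∀ a, 1 ≤ a → a ≤ τ → ¬ p ∣ a → k * a ≤ τ := by
      intro a ha1 haτ hpa
      have h1 : (k * a) % q ≤ τ := INV a ha1 haτ hpa
      have hpka : ¬ p ∣ k * a := fun h => (hp.dvd_mul.mp h).elim hkp hpa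
      have hlt : k * a < q := by
        have hle' : k * a ≤ q := le_trans (Nat.mul_le_mul_left k haτ) hle
        rcases hle'.lt_or_eq with h | h
        · exact h
        · exact absurd (h ▸ hpq) hpka
      rwa [Nat.mod_eq_of_lt hlt] at h1
    by_cases hpτ : p ∣ τ
    · have hτ3 : 3 ≤ τ := by
        rcases Nat.lt_or_ge τ 3 with h | h
        · have : τ = 2 := by omega
          subst this
          have := Nat.le_of_dvd (by omega) hpτ
          omega
        · exact h
      have hpa : ¬ p ∣ (τ - 1) := by
        intro h
        have h2 := Nat.dvd_sub hpτ h
        have : τ - (τ - 1) = 1 := by omega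
        rw [this] at h2
        exact hnd1 h2
      have h1 := key (τ - 1) (by omega) (by omega) hpa
      have h2 : 2 * (τ - 1) ≤ k * (τ - 1) := Nat.mul_le_mul_right _ hk2
      omega
    · have h1 := key τ (by omega) le_rfl hpτ
      have h2 : 2 * τ ≤ k * τ := Nat.mul_le_mul_right _ hk2
      omega
  -- D4 : analysis of m = q / k
  have hdm : k * (q / k) + q % k = q := Nat.div_add_mod q k
  set m := q / k with hm
  have hmodk : q % k < k := Nat.mod_lt _ (by omega)
  have hkm_le : k * m ≤ q := by omega
  have hkm_gt : q < k * m + k := by omega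
  have hmτ : m < τ := by
    have h : k * m < k * τ := by omega
    exact Nat.lt_of_mul_lt_mul_left h
  have hkmτ : τ < k * m := by omega
  have hm1 : 1 ≤ m := by
    rcases Nat.eq_zero_or_pos m with h | h
    · rw [h, Nat.mul_zero] at hkmτ; omega
    · omega
  have hpm : p ∣ m := by
    apply gap 0 m hm1 (by omega) (by omega)
    have : (0 + 1) * q = q := by ring
    omega
  have hm2 : 2 ≤ m := by
    rcases Nat.lt_or_ge m 2 with h | h
    · have he : m = 1 := by omega
      rw [he, Nat.mul_one] at hkmτ; omega
    · exact h
  have hkm1 : k * (m - 1) ≤ τ := by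
    by_contra hgt
    push_neg at hgt
    have hsplit : k * m = k * (m - 1) + k := by
      have h1 : m - 1 + 1 = m := by omega
      calc k * m = k * ((m-1) + 1) := by rw [h1]
        _ = k * (m-1) + k := by ring
    have hpm1 : p ∣ (m - 1) := by
      apply gap 0 (m - 1) (by omega) (by omega) (by omega)
      have : (0 + 1) * q = q := by ring
      omega
    have h2 := Nat.dvd_sub hpm hpm1
    have h3 : m - (m - 1) = 1 := by omega
    rw [h3] at h2
    exact hnd1 h2
  have hkm_ub : k * m ≤ τ + k := by
    have hsplit : k * m = k * (m - 1) + k := by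
      have h1 : m - 1 + 1 = m := by omega
      calc k * m = k * ((m-1) + 1) := by rw [h1]
        _ = k * (m-1) + k := by ring
    omega
  have h4k : q + 3 ≤ 4 * k := by omega
  have hm3 : m < 4 := by
    have h2 : k * 4 = 4 * k := by ring
    have h : k * m < k * 4 := by omega
    exact Nat.lt_of_mul_lt_mul_left h
  have hpm' : p ≤ m := Nat.le_of_dvd (by omega) hpm
  have hpeq : p = 3 := by omega
  have hmeq : m = 3 := by omega
  rw [hmeq] at hkm_le hkm_ub hkmτ hkm_gt
  subst hpeq
  -- 3k < q
  have h3k : 3 * k < q := by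
    have hle : 3 * k ≤ q := by omega
    rcases hle.lt_or_eq with h | h
    · exact h
    · exfalso
      obtain ⟨s, rfl⟩ : ∃ s, r = s + 1 := ⟨r - 1, by omega⟩
      rw [pow_succ] at hqpr
      have hk3s : k = 3 ^ s := by
        have h2 : 3 * k = 3 ^ s * 3 := by omega
        omega
      rcases Nat.eq_zero_or_pos s with h0 | h0
      · rw [h0, pow_zero] at hk3s; omega
      · exact hkp (hk3s ▸ dvd_pow_self 3 (by omega))
  have h3q : (3 : ℕ) ∣ q := hpq
  -- window facts
  have wfact : ∀ j, (j+1) * q ≤ k * τ →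
      3 ∣ ((j+1)*q)/k ∧ j*q + τ < k * (((j+1)*q)/k) ∧ k * (((j+1)*q)/k) ≤ j*q + τ + k
      ∧ (j+1)*q < k * (((j+1)*q)/k) + k ∧ k * (((j+1)*q)/k) ≤ (j+1)*q := by
    intro j hv
    set M := ((j+1)*q)/k with hM
    have hdm2 : k * M + ((j+1)*q) % k = (j+1)*q := Nat.div_add_mod _ k
    have hmod2 : ((j+1)*q) % k < k := Nat.mod_lt _ (by omega)
    have e1 : (j+1)*q = j*q + q := by ring
    have hub : k * M ≤ (j+1)*q := by omega
    have hlb : (j+1)*q < k*M + k := by omega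
    have hlo : j*q + τ < k * M := by omega
    have hMτ : M ≤ τ := by
      have h : k * M ≤ k * τ := le_trans hub hv
      exact Nat.le_of_mul_le_mul_left h (by omega)
    have hM1 : 1 ≤ M := by
      rcases Nat.eq_zero_or_pos M with h | h
      · rw [h, Nat.mul_zero] at hlo; omega
      · omega
    have h3M : 3 ∣ M := gap j M hM1 hMτ hlo hub
    have hM2 : 2 ≤ M := by
      rcases Nat.lt_or_ge M 2 with h | h
      · have he : M = 1 := by omega
        rw [he, Nat.mul_one] at hlo; omega
      · exact h
    have hsplit : k * M = k * (M-1) + k := by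
      have h1 : M - 1 + 1 = M := by omega
      calc k * M = k * ((M-1) + 1) := by rw [h1]
        _ = k * (M-1) + k := by ring
    have hkM1 : k * (M-1) ≤ j*q + τ := by
      by_contra hgt
      push_neg at hgt
      have h3M1 : 3 ∣ (M-1) := gap j (M-1) (by omega) (by omega) (by omega) (by omega)
      have h2 := Nat.dvd_sub h3M h3M1
      have h3 : M - (M - 1) = 1 := by omega
      rw [h3] at h2
      omega
    exact ⟨h3M, hlo, by omega, hlb, hub⟩
  -- induction : M_j = 3(j+1)
  have ind : ∀ j, (j+1) * q ≤ k * τ → ((j+1)*q)/k = 3*(j+1) := by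
    intro j
    induction j with
    | zero =>
      intro _
      have e : (0+1)*q = q := by ring
      rw [e]
      omega
    | succ j ih =>
      intro hv2
      have hv1 : (j+1)*q ≤ k*τ := by
        have h : (j+1)*q ≤ (j+1+1)*q := Nat.mul_le_mul_right q (by omega)
        omega
      obtain ⟨d1, lo1, ub1, dlb1, dub1⟩ := wfact j hv1
      obtain ⟨d2, lo2, ub2, dlb2, dub2⟩ := wfact (j+1) hv2
      have hM1eq := ih hv1
      rw [hM1eq] at lo1 ub1 dlb1 dub1
      set M' := ((j+1+1)*q)/k with hM'
      have e1 : (j+1+1)*q = j*q + q + q := by ring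
      have e2 : (j+1)*q = j*q + q := by ring
      have e3 : k*(3*(j+1)) + 2*k = k*(3*(j+1)+2) := by ring
      have e4 : k*(3*(j+1)) + 4*k = k*(3*(j+1)+4) := by ring
      have hlow : k*(3*(j+1)+2) < k*M' := by omega
      have hupp : k*M' < k*(3*(j+1)+4) := by omega
      have l1 : 3*(j+1)+2 < M' := Nat.lt_of_mul_lt_mul_left hlow
      have l2 : M' < 3*(j+1)+4 := Nat.lt_of_mul_lt_mul_left hupp
      omega
  -- final step
  have hc := Nat.div_add_mod (k*τ) q
  set c := (k*τ)/q with hcdef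
  have hmodq : (k*τ) % q < q := Nat.mod_lt _ (by omega)
  have hc1 : 1 ≤ c := by
    rcases Nat.eq_zero_or_pos c with h | h
    · rw [h, Nat.mul_zero] at hc; omega
    · omega
  have ecc : (c-1)+1 = c := by omega
  have hvalid : ((c-1)+1)*q ≤ k*τ := by
    rw [ecc]
    have e : c*q = q*c := by ring
    omega
  have hMc := ind (c-1) hvalid
  obtain ⟨_, _, _, dlbc, _⟩ := wfact (c-1) hvalid
  rw [hMc, ecc] at dlbc
  -- dlbc : c*q < k*(3*c) + k
  obtain ⟨e', he'⟩ : ∃ e', q = 3*k + e' := ⟨q - 3*k, by omega⟩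
  have h3e' : (3:ℕ) ∣ e' := by omega
  obtain ⟨e, rfl⟩ := h3e'
  have he1 : 1 ≤ e := by omega
  have ef1 : c*q = 3*(c*k) + 3*(c*e) := by rw [he']; ring
  have ef2 : k*(3*c) = 3*(c*k) := by ring
  have hce : 3*(c*e) < k := by omega
  rcases Nat.lt_or_ge e 2 with he2 | he2
  · have hee : e = 1 := by omega
    rw [hee] at he'
    exact ⟨rfl, by omega⟩
  · exfalso
    have hc2e : c*2 ≤ c*e := Nat.mul_le_mul_left c he2
    have ef3 : 3*(c*2) = 6*c := by ring
    have h6c : 6 * c < k := by omega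
    have hA : 6*(k*τ) < q*k + 6*q := by
      have h1 : q*(6*c) ≤ q*k := Nat.mul_le_mul_left q (by omega)
      have e3 : q*(6*c) = 6*(q*c) := by ring
      omega
    have hB : 2*(k*q) + 30*k ≤ 6*(k*τ) := by
      have h1 : q + 15 ≤ 3*τ := by omega
      have h2 : k*(q+15) ≤ k*(3*τ) := Nat.mul_le_mul_left k h1
      have e4 : k*(q+15) = k*q + 15*k := by ring
      have e5 : k*(3*τ) = 3*(k*τ) := by ring
      omega
    have hC : 9*q ≤ k*q := by
      have h1 : 9 ≤ k := by omega
      exact Nat.mul_le_mul_right q h1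
    have e6 : q*k = k*q := by ring
    omega

lemma no_inv (p r q : ℕ) (hp : p.Prime) (hodd : p ≠ 2) (hr : 1 ≤ r)
    (hqpr : q = p ^ r) (k t : ℕ)
    (hk2 : 2 ≤ k) (hkq : k < q) (hkp : ¬ p ∣ k) (ht1 : 1 ≤ t) (ht2 : t + 2 ≤ q)
    (INV1 : ∀ x, 1 ≤ x → x ≤ t → ¬ p ∣ x → (k * x) % q ≤ t)
    (INV2 : ∀ x, 1 ≤ x → x ≤ q - 1 - t → ¬ p ∣ x → (k * x) % q ≤ q - 1 - t) :
    False := by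
  have hpq : p ∣ q := hqpr ▸ dvd_pow_self p (by omega)
  have hq1 : 1 < q := by
    have h1 : p ≤ p ^ r := Nat.le_self_pow (by omega) p
    have := hp.two_le
    omega
  set τ := min t (q - 1 - t) with hτ
  have hτ1 : 1 ≤ τ := by omega
  have hτq : 2 * τ + 1 ≤ q := by omega
  have INVτ : ∀ x, 1 ≤ x → x ≤ τ → ¬ p ∣ x → (k * x) % q ≤ τ := by
    intro x hx1 hxτ hpx
    rcases le_total t (q - 1 - t) with hle | hle
    · have he : τ = t := min_eq_left hle
      rw [he] at hxτ ⊢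
      exact INV1 x hx1 hxτ hpx
    · have he : τ = q - 1 - t := min_eq_right hle
      rw [he] at hxτ ⊢
      exact INV2 x hx1 hxτ hpx
  have modfacts : ∀ K x : ℕ, ¬ p ∣ K → ¬ p ∣ x → 1 ≤ (K*x) % q ∧ ¬ p ∣ (K*x) % q := by
    intro K x hK hx
    have hpKx : ¬ p ∣ K * x := fun h => (hp.dvd_mul.mp h).elim hK hx
    have hd := Nat.div_add_mod (K*x) q
    have hqd : p ∣ q * ((K*x)/q) := Dvd.dvd.mul_right hpq _
    constructor
    · rcases Nat.eq_zero_or_pos ((K*x) % q) with h | h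
      · exfalso
        apply hpKx
        rw [h, Nat.add_zero] at hd
        exact hd ▸ hqd
      · omega
    · intro hpm
      exact hpKx (hd ▸ dvd_add hqd hpm)
  -- apply main lemma to k
  obtain ⟨hp3, hk3⟩ := main_lemma p r q hp hodd hr hqpr k τ hk2 hkq hkp hτ1 hτq INVτ
  subst hp3
  -- k2 = k^2 mod q
  set k2 := (k * k) % q with hk2def
  have hmf := modfacts k k hkp hkp
  have hk2q : k2 < q := Nat.mod_lt _ (by omega)
  have hk2p : ¬ (3:ℕ) ∣ k2 := hmf.2
  have hk21 : 1 ≤ k2 := hmf.1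
  -- k2 ≠ 1
  have h9q : (9:ℕ) ∣ q := by
    have hr2 : 2 ≤ r := by
      by_contra h
      have : r = 1 := by omega
      rw [this, pow_one] at hqpr
      omega
    calc (9:ℕ) = 3 ^ 2 := by norm_num
      _ ∣ 3 ^ r := pow_dvd_pow 3 hr2
      _ = q := hqpr.symm
  have h3k1 : (3:ℕ) ∣ k + 1 := by omega
  have hk2ne1 : k2 ≠ 1 := by
    intro h1
    have hd := Nat.div_add_mod (k*k) q
    rw [← hk2def, h1] at hd
    -- k*k = q * d + 1 ; (k-1)*(k+1) = q*d = 3*(k+1)*d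
    set d := (k*k)/q with hdd
    have hfac : (k-1)*(k+1) = q * d := by
      have e1 : (k-1)*(k+1) + 1 = k*k := by
        obtain ⟨a, rfl⟩ : ∃ a, k = a + 2 := ⟨k - 2, by omega⟩
        simp [Nat.add_sub_cancel]
        ring
      omega
    have hq3 : q = 3 * (k+1) := by omega
    rw [hq3] at hfac
    have e2 : 3*(k+1)*d = (3*d)*(k+1) := by ring
    rw [e2] at hfac
    have hcancel : k - 1 = 3 * d := Nat.eq_of_mul_eq_mul_right (by omega) hfac
    -- 3 ∣ k-1 and 3 ∣ k+1 -> 3 ∣ 2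
    omega
  have hk22 : 2 ≤ k2 := by omega
  -- INV for k2
  have INVτ2 : ∀ x, 1 ≤ x → x ≤ τ → ¬ (3:ℕ) ∣ x → (k2 * x) % q ≤ τ := by
    intro x hx1 hxτ hpx
    have e : (k2 * x) % q = (k * ((k * x) % q)) % q := by
      rw [hk2def, Nat.mod_mul_mod, Nat.mul_mod_mod, mul_assoc]
    rw [e]
    have hy := modfacts k x hkp hpx
    exact INVτ _ hy.1 (INVτ x hx1 hxτ hpx) hy.2
  obtain ⟨_, hk23⟩ := main_lemma 3 r q hp hodd hr hqpr k2 τ hk22 hk2q hk2p hτ1 hτq INVτ2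
  -- k2 = k, so q ∣ k*(k-1), coprime -> q ∣ k-1 -> k = 1
  have hkk : k2 = k := by omega
  have hd := Nat.div_add_mod (k*k) q
  rw [← hk2def, hkk] at hd
  have hfac : k * (k - 1) = q * ((k*k)/q) := by
    have e1 : k * (k-1) + k = k * k := by
      obtain ⟨a, rfl⟩ : ∃ a, k = a + 2 := ⟨k - 2, by omega⟩
      simp [Nat.add_sub_cancel]
      ring
    omega
  have hcop : Nat.Coprime q k := by
    rw [hqpr]
    exact Nat.Coprime.pow_left r ((hp.coprime_iff_not_dvd).mpr hkp)
  have hdvd : q ∣ k * (k - 1) := ⟨(k*k)/q, hfac⟩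
  have hdvd1 : q ∣ k - 1 := hcop.dvd_of_dvd_mul_left hdvd
  have := Nat.le_of_dvd (by omega) hdvd1
  omega

lemma bridge (p r q : ℕ) (hp : p.Prime) (hodd : p ≠ 2) (hr : 1 ≤ r)
    (hqpr : q = p ^ r)
    (f : (ZMod q)ˣ → ℝ)
    (hmono : ∀ u v : (ZMod q)ˣ,
      (u : ZMod q).val ≤ (v : ZMod q).val → f u ≤ f v)
    (k : (ZMod q)ˣ) :
    (∀ u : (ZMod q)ˣ, f (k * u) = f u) ↔
      (k = 1 ∨ ∀ u v : (ZMod q)ˣ, f u = f v) := by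
  have hp3 : 3 ≤ p := by
    rcases hp.two_le.lt_or_eq with h | h; · omega
    · exact absurd h.symm hodd
  have hq1 : 1 < q := by
    have h1 : p ≤ p ^ r := Nat.le_self_pow (by omega) p
    omega
  haveI : Fact (1 < q) := ⟨hq1⟩
  haveI : NeZero q := ⟨by omega⟩
  have hpq : p ∣ q := hqpr ▸ dvd_pow_self p (by omega)
  constructor
  · intro h
    by_cases hk1 : k = 1
    · exact Or.inl hk1
    right
    have val_pos : ∀ u : (ZMod q)ˣ, 1 ≤ ((u : ZMod q)).val := by
      intro u
      have h0 : ((u : ZMod q)).val ≠ 0 := fun hh => u.ne_zero ((ZMod.val_eq_zero _).mp hh)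
      omega
    have fmin : ∀ u, f 1 ≤ f u := by
      intro u
      apply hmono
      rw [Units.val_one, ZMod.val_one]
      exact val_pos u
    have hval_neg : ∀ a : ZMod q, a ≠ 0 → (-a).val = q - a.val := by
      intro a ha; rw [ZMod.neg_val]; simp [ha]
    have hneg1val : ((-1 : (ZMod q)ˣ) : ZMod q).val = q - 1 := by
      rw [Units.val_neg, Units.val_one, hval_neg 1 one_ne_zero, ZMod.val_one]
    have fmax : ∀ u, f u ≤ f (-1) := by
      intro u; apply hmono; rw [hneg1val]
      have := ZMod.val_lt (u : ZMod q); omega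
    by_cases hconst : f (-1) = f 1
    · intro u v
      have h1 : f u = f 1 := le_antisymm (hconst ▸ fmax u) (fmin u)
      have h2 : f v = f 1 := le_antisymm (hconst ▸ fmax v) (fmin v)
      rw [h1, h2]
    exfalso
    classical
    set S : Finset (ZMod q)ˣ := Finset.univ.filter (fun u => f u = f 1) with hS
    have hS1 : (1 : (ZMod q)ˣ) ∈ S := by simp [hS]
    set vf : (ZMod q)ˣ → ℕ := fun u => ((u : ZMod q)).val with hvf
    obtain ⟨u0, hu0S, hu0⟩ := Finset.exists_mem_eq_sup S ⟨1, hS1⟩ vf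
    set t := S.sup vf with hts
    have hmemle : ∀ u : (ZMod q)ˣ, u ∈ S → vf u ≤ t := fun u hu => Finset.le_sup hu
    have hu0f : f u0 = f 1 := (Finset.mem_filter.mp hu0S).2
    have hlemem : ∀ u : (ZMod q)ˣ, vf u ≤ t → u ∈ S := by
      intro u hu
      have h1 : f u ≤ f u0 := hmono u u0 (by rw [show ((u0 : ZMod q)).val = t from hu0.symm]; exact hu)
      have h2 : f u = f 1 := le_antisymm (le_trans h1 (le_of_eq hu0f)) (fmin u)
      simp [hS, h2]
    have ht1 : 1 ≤ t := by
      have h1 := hmemle 1 hS1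
      have h2 : vf 1 = 1 := by rw [hvf]; simp [ZMod.val_one]
      omega
    have ht2 : t + 2 ≤ q := by
      have hlt : t < q := by rw [hu0]; exact ZMod.val_lt _
      rcases Nat.lt_or_ge t (q - 1) with hl | hg
      · omega
      · exfalso
        have he : ((u0 : ZMod q)).val = q - 1 := by
          have h3 : vf u0 = ((u0 : ZMod q)).val := rfl
          omega
        have he2 : u0 = -1 := by
          apply Units.ext
          apply ZMod.val_injective
          rw [he, hneg1val]
        rw [he2] at hu0f
        exact hconst hu0f
    set κ := ((k : ZMod q)).val with hκ
    have hκcop : Nat.Coprime κ q := ZMod.val_coe_unit_coprime k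
    have hκp : ¬ p ∣ κ := by
      intro hd
      have h1 := Nat.dvd_gcd hd hpq
      rw [hκcop] at h1
      have := Nat.dvd_one.mp h1
      omega
    have hκq : κ < q := ZMod.val_lt _
    have hκ2 : 2 ≤ κ := by
      have h1 := val_pos k
      rcases Nat.lt_or_ge κ 2 with hl | hg
      · exfalso
        have he : κ = 1 := by omega
        apply hk1
        apply Units.ext
        apply ZMod.val_injective
        rw [show ((k : ZMod q)).val = κ from rfl, he, Units.val_one, ZMod.val_one]
      · exact hg
    have hbridge : ∀ u : (ZMod q)ˣ,
        (((k * u : (ZMod q)ˣ) : ZMod q)).val = (κ * ((u : ZMod q)).val) % q := by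
      intro u; rw [Units.val_mul, ZMod.val_mul]
    have hunit : ∀ x : ℕ, ¬ p ∣ x → ∃ u : (ZMod q)ˣ, ((u : ZMod q)).val = x % q := by
      intro x hx
      have hcop : Nat.Coprime x q := by
        rw [hqpr]
        exact Nat.Coprime.pow_right r ((hp.coprime_iff_not_dvd).mpr hx).symm
      refine ⟨ZMod.unitOfCoprime x hcop, ?_⟩
      rw [ZMod.coe_unitOfCoprime, ZMod.val_natCast]
    have INV1 : ∀ x, 1 ≤ x → x ≤ t → ¬ p ∣ x → (κ * x) % q ≤ t := by
      intro x hx1 hxt hpx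
      obtain ⟨u, hu⟩ := hunit x hpx
      have hux : ((u : ZMod q)).val = x := by rw [hu, Nat.mod_eq_of_lt (by omega)]
      have huS : u ∈ S := hlemem u (by rw [hvf]; simpa [hux] using hxt)
      have hfu : f (k * u) = f 1 := by
        rw [h u]; exact (Finset.mem_filter.mp huS).2
      have hmem : k * u ∈ S := by simp [hS, hfu]
      have hle := hmemle _ hmem
      rw [hvf] at hle
      simp only [] at hle
      rw [hbridge u, hux] at hle
      exact hle
    have INV2 : ∀ x, 1 ≤ x → x ≤ q - 1 - t → ¬ p ∣ x → (κ * x) % q ≤ q - 1 - t := by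
      intro x hx1 hxt hpx
      obtain ⟨u, hu⟩ := hunit x hpx
      have hux : ((u : ZMod q)).val = x := by rw [hu, Nat.mod_eq_of_lt (by omega)]
      have hnegu : ((-u : (ZMod q)ˣ) : ZMod q).val = q - x := by
        rw [Units.val_neg, hval_neg _ u.ne_zero, hux]
      have hnotS : (-u) ∉ S := by
        intro hmem
        have h1 := hmemle _ hmem
        rw [hvf] at h1
        simp only [] at h1
        rw [hnegu] at h1
        omega
      have hfneg : f (-u) ≠ f 1 := by
        intro hf; exact hnotS (by simp [hS, hf])
      have hknotS : k * (-u) ∉ S := by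
        intro hmem
        exact hfneg (by rw [← h (-u)]; exact (Finset.mem_filter.mp hmem).2)
      have hne0 : ((k * u : (ZMod q)ˣ) : ZMod q) ≠ 0 := Units.ne_zero _
      have hvk : ((k * (-u) : (ZMod q)ˣ) : ZMod q).val
          = q - ((k * u : (ZMod q)ˣ) : ZMod q).val := by
        have e : (k * (-u) : (ZMod q)ˣ) = -(k * u) := by rw [mul_neg]
        rw [e, Units.val_neg, hval_neg _ hne0]
      have hgt : ¬ (((k * (-u) : (ZMod q)ˣ) : ZMod q).val ≤ t) := by
        intro hle
        exact hknotS (hlemem _ (by rw [hvf]; exact hle))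
      have hb := hbridge u
      rw [hux] at hb
      have hpos := val_pos (k * u)
      rw [hvk, hb] at hgt
      rw [hb] at hpos
      omega
    exact no_inv p r q hp hodd hr hqpr κ t hκ2 hκq hκp ht1 ht2 INV1 INV2
  · rintro (rfl | hc)
    · intro u; rw [one_mul]
    · intro u; exact hc _ _

/-- Let `p` be an odd prime, `q = p^r`, and `f : (ℤ/qℤ)ˣ → ℝ` monotone
(nondecreasing) on the representatives in `{1, …, q}` coprime to `p`,
ordered as integers. For `k ∈ (ℤ/qℤ)ˣ`: `f(k·u) = f(u)` for all `u` iff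
`k = 1` or `f` is constant. -/
theorem stmt_5 (p r : ℕ) (hp : p.Prime) (hodd : p ≠ 2) (hr : 1 ≤ r)
    (f : (ZMod (p ^ r))ˣ → ℝ)
    (hmono : ∀ u v : (ZMod (p ^ r))ˣ,
      (u : ZMod (p ^ r)).val ≤ (v : ZMod (p ^ r)).val → f u ≤ f v)
    (k : (ZMod (p ^ r))ˣ) :
    (∀ u : (ZMod (p ^ r))ˣ, f (k * u) = f u) ↔
      (k = 1 ∨ ∀ u v : (ZMod (p ^ r))ˣ, f u = f v) :=
  bridge p r (p ^ r) hp hodd hr rfl f hmono k
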